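/- Let u ∈ ℝ^n, P = u u^⊤, and let Q ∈ ℝ^{n×n} be a nonzero symmetric positive semidefinite matrix. Then the smallest positive eigenvalue of P + Q satisfies λ_min(P+Q) ≥ (1 − cos θ(u, ran Q)) · min{‖u‖², λ_min(Q)}, where λ_min denotes the smallest positive eigenvalue and cos θ(u, ran Q) = ‖P_{ran Q} u‖/‖u‖. -/

import Mathlib

open scoped Matrix

/-- The smallest positive eigenvalue of a (nonzero, symmetric positive
semidefinite) matrix `M`, characterized as the infimum of the Rayleigh
quotient `xᵀ M x` over unit vectors `x` in the range of `M`. -/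
noncomputable def lamMinPos {n : ℕ} (M : Matrix (Fin n) (Fin n) ℝ) : ℝ :=
  sInf {t : ℝ | ∃ x : EuclideanSpace ℝ (Fin n), ‖x‖ = 1 ∧
    (∃ y : Fin n → ℝ, (x : Fin n → ℝ) = M.mulVec y) ∧
    t = (x : Fin n → ℝ) ⬝ᵥ M.mulVec x}

set_option maxHeartbeats 1000000

open scoped Matrix RealInnerProductSpace

section LamMinAuxSec

variable {n : ℕ}

private lemma key_norm (c a s t : ℝ) (hc0 : 0 ≤ c)
    (ha2 : a^2 = 1 - c^2) (hst : s^2 + t^2 = 1) :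
    1 - c ≤ (s*a - c*t)^2 + t^2 := by
  have hX : 2*(a*s*t + c*(s^2-t^2)/2) ≤ 1 := by
    have hX2 : (2*(a*s*t + c*(s^2-t^2)/2))^2 + (a*(s^2-t^2) - 2*c*s*t)^2 = 1 := by
      linear_combination (s^2+t^2)^2 * ha2 + (s^2+t^2+1) * hst
    nlinarith [sq_nonneg (2*(a*s*t + c*(s^2-t^2)/2) - 1), sq_nonneg (a*(s^2-t^2) - 2*c*s*t)]
  have hE : (s*a - c*t)^2 + t^2 - (1-c) = c*(1 - 2*(a*s*t + c*(s^2-t^2)/2)) := by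
    linear_combination s^2 * ha2 + hst
  nlinarith [mul_nonneg hc0 (by linarith : (0:ℝ) ≤ 1 - 2*(a*s*t + c*(s^2-t^2)/2))]

private lemma key_real (U p lam A B s t : ℝ)
    (hp0 : 0 ≤ p) (hpU : p ≤ U) (hlam0 : 0 ≤ lam)
    (hs : 0 ≤ s) (ht : 0 ≤ t) (hst : s^2 + t^2 = 1)
    (hA : A^2 = s^2 * (U^2 - p^2)) (hB : |B| ≤ p * t) :
    (1 - p/U) * min (U^2) lam ≤ (A+B)^2 + lam * t^2 := by
  have hU0 : 0 ≤ U := le_trans hp0 hpU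
  rcases eq_or_lt_of_le hU0 with hU | hU
  · have hp : p = 0 := le_antisymm (hU ▸ hpU) hp0
    have hmin : min (U^2) lam = 0 := by
      rw [← hU]; simpa using hlam0
    rw [hmin]
    nlinarith [sq_nonneg (A+B), mul_nonneg hlam0 (sq_nonneg t)]
  · set m := min (U^2) lam with hm
    have hm0 : 0 ≤ m := le_min (sq_nonneg U) hlam0
    have hmU : m ≤ U^2 := min_le_left _ _
    have hml : m ≤ lam := min_le_right _ _
    set c := p / U with hc
    have hc0 : 0 ≤ c := div_nonneg hp0 hU0
    have hc1 : c ≤ 1 := (div_le_one hU).mpr hpU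
    have hUp2 : (0:ℝ) ≤ U^2 - p^2 := by nlinarith
    set a' := Real.sqrt (U^2 - p^2) with ha'
    have ha'0 : 0 ≤ a' := Real.sqrt_nonneg _
    have ha'2 : a'^2 = U^2 - p^2 := Real.sq_sqrt hUp2
    have hAabs : |A| = s * a' := by
      calc |A| = Real.sqrt (A^2) := (Real.sqrt_sq_eq_abs A).symm
      _ = Real.sqrt ((s*a')^2) := by rw [hA, ← ha'2]; ring_nf
      _ = s*a' := Real.sqrt_sq (mul_nonneg hs ha'0)
    rcases le_or_gt (p*t) (s*a') with hcase | hcase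
    · have h0 : 0 ≤ s*a' - p*t := by linarith
      have h2 : |A| - |B| ≤ |A+B| := by
        have := abs_add_le (A+B) (-B)
        simp only [add_neg_cancel_right, abs_neg] at this
        linarith
      have h3 : (s*a' - p*t)^2 ≤ (A+B)^2 := by
        calc (s*a' - p*t)^2 ≤ |A+B|^2 := by
              apply pow_le_pow_left₀ h0 (by linarith) 2
        _ = (A+B)^2 := sq_abs _
      have hUne : U ≠ 0 := ne_of_gt hU
      have ha2 : (a'/U)^2 = 1 - c^2 := by
        rw [hc, div_pow, div_pow, ha'2, eq_sub_iff_add_eq, ← add_div,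
          div_eq_one_iff_eq (pow_ne_zero 2 hUne)]
        ring
      have hkey := key_norm c (a'/U) s t hc0 ha2 hst
      have hX : s*(a'/U) - c*t = (s*a' - p*t)/U := by rw [hc]; ring
      have hUeq : U^2 * (s*(a'/U) - c*t)^2 = (s*a' - p*t)^2 := by
        rw [hX, div_pow, mul_comm]
        exact div_mul_cancel₀ _ (pow_ne_zero 2 hUne)
      nlinarith [mul_le_mul_of_nonneg_left hkey hm0,
        mul_le_mul_of_nonneg_right hmU (sq_nonneg (s*(a'/U) - c*t)),
        mul_le_mul_of_nonneg_right hml (sq_nonneg t)]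
    · have h4 : s^2*(U^2-p^2) ≤ p^2*t^2 := by
        nlinarith [mul_nonneg hs ha'0, mul_nonneg hp0 ht, ha'2]
      have hp2 : p^2*s^2 + p^2*t^2 = p^2 := by linear_combination p^2 * hst
      have h5 : s^2*U^2 ≤ p^2 := by nlinarith [h4, hp2]
      have h8 : U^2 - p^2 ≤ t^2*U^2 := by nlinarith [h5, hst]
      have h6 : 1 - c ≤ t^2 := by
        rw [hc]
        have h7 : (1:ℝ) - p/U = (U-p)/U := by field_simp
        rw [h7, div_le_iff₀ hU]
        nlinarith [h8, mul_le_mul_of_nonneg_left hpU hp0, mul_pos hU hU, sq_nonneg (t*U)]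
      nlinarith [mul_le_mul_of_nonneg_left h6 hm0, sq_nonneg (A+B),
        mul_le_mul_of_nonneg_right hml (sq_nonneg t)]

private lemma toEuc_coe (Q : Matrix (Fin n) (Fin n) ℝ) (x : EuclideanSpace ℝ (Fin n)) :
    (Matrix.toEuclideanLin Q x : Fin n → ℝ) = Q.mulVec x := rfl

private lemma inner_eq_dot (x y : EuclideanSpace ℝ (Fin n)) :
    ⟪x, y⟫ = (x : Fin n → ℝ) ⬝ᵥ (y : Fin n → ℝ) := by
  rw [EuclideanSpace.inner_eq_star_dotProduct, dotProduct_comm]; rfl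

private lemma rankone_mulVec (u : EuclideanSpace ℝ (Fin n)) (x : Fin n → ℝ) :
    (Matrix.of (fun i j => u i * u j)).mulVec x = ((u : Fin n → ℝ) ⬝ᵥ x) • (u : Fin n → ℝ) := by
  funext i
  simp [Matrix.mulVec, dotProduct, Finset.mul_sum, Finset.sum_mul]
  congr 1; funext j; ring

private lemma pyth (V : Submodule ℝ (EuclideanSpace ℝ (Fin n))) (z : EuclideanSpace ℝ (Fin n)) :
    ‖(Submodule.orthogonalProjection V z : EuclideanSpace ℝ (Fin n))‖^2
      + ‖z - Submodule.orthogonalProjection V z‖^2 = ‖z‖^2 := by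
  have h0 : ⟪(Submodule.orthogonalProjection V z : EuclideanSpace ℝ (Fin n)),
      z - Submodule.orthogonalProjection V z⟫ = 0 :=
    Submodule.inner_right_of_mem_orthogonal (SetLike.coe_mem _)
      (Submodule.sub_starProjection_mem_orthogonal z)
  have hzz : (Submodule.orthogonalProjection V z : EuclideanSpace ℝ (Fin n))
      + (z - Submodule.orthogonalProjection V z) = z := by abel
  conv_rhs => rw [← hzz]
  rw [norm_add_sq_real, h0]
  ring

end LamMinAuxSec

section MainAux

variable {n : ℕ}

private lemma psd_dot (M : Matrix (Fin n) (Fin n) ℝ) (hM : M.PosSemidef) (x : Fin n → ℝ) :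
    0 ≤ x ⬝ᵥ M.mulVec x := by simpa using hM.dotProduct_mulVec_nonneg x

private lemma lamMinPos_nonneg (M : Matrix (Fin n) (Fin n) ℝ) (hM : M.PosSemidef) :
    0 ≤ lamMinPos M := by
  apply Real.sInf_nonneg
  rintro t ⟨x, -, -, rfl⟩
  exact psd_dot M hM x

private lemma lamMinPos_bddBelow (M : Matrix (Fin n) (Fin n) ℝ) (hM : M.PosSemidef) :
    BddBelow {t : ℝ | ∃ x : EuclideanSpace ℝ (Fin n), ‖x‖ = 1 ∧
      (∃ y : Fin n → ℝ, (x : Fin n → ℝ) = M.mulVec y) ∧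
      t = (x : Fin n → ℝ) ⬝ᵥ M.mulVec x} := by
  refine ⟨0, ?_⟩
  rintro t ⟨x, -, -, rfl⟩
  exact psd_dot M hM x

private lemma rayleigh_lb (M : Matrix (Fin n) (Fin n) ℝ) (hM : M.PosSemidef)
    (v : EuclideanSpace ℝ (Fin n)) (hv : ∃ y : Fin n → ℝ, (v : Fin n → ℝ) = M.mulVec y) :
    lamMinPos M * ‖v‖^2 ≤ (v : Fin n → ℝ) ⬝ᵥ M.mulVec v := by
  rcases eq_or_ne v 0 with rfl | hv0
  · simp
  · obtain ⟨y, hy⟩ := hv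
    have hr : 0 < ‖v‖ := norm_pos_iff.mpr hv0
    set r : ℝ := ‖v‖ with hrdef
    set x : EuclideanSpace ℝ (Fin n) := r⁻¹ • v with hxdef
    have hx1 : ‖x‖ = 1 := by
      rw [hxdef, norm_smul, norm_inv, norm_norm, ← hrdef, inv_mul_cancel₀ (ne_of_gt hr)]
    have hxy : (x : Fin n → ℝ) = M.mulVec (r⁻¹ • y) := by
      show r⁻¹ • (v : Fin n → ℝ) = M.mulVec (r⁻¹ • y)
      rw [Matrix.mulVec_smul, hy]
    have hval : (x : Fin n → ℝ) ⬝ᵥ M.mulVec x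
        = r⁻¹ * (r⁻¹ * ((v : Fin n → ℝ) ⬝ᵥ M.mulVec v)) := by
      show (r⁻¹ • (v : Fin n → ℝ)) ⬝ᵥ M.mulVec (r⁻¹ • (v : Fin n → ℝ)) = _
      rw [Matrix.mulVec_smul, smul_dotProduct, dotProduct_smul]
      simp [smul_eq_mul]
    have hmem : (x : Fin n → ℝ) ⬝ᵥ M.mulVec x ∈ {t : ℝ | ∃ x : EuclideanSpace ℝ (Fin n),
        ‖x‖ = 1 ∧ (∃ y : Fin n → ℝ, (x : Fin n → ℝ) = M.mulVec y) ∧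
        t = (x : Fin n → ℝ) ⬝ᵥ M.mulVec x} := ⟨x, hx1, ⟨r⁻¹ • y, hxy⟩, rfl⟩
    have hle : lamMinPos M ≤ r⁻¹ * (r⁻¹ * ((v : Fin n → ℝ) ⬝ᵥ M.mulVec v)) := by
      rw [← hval]
      exact csInf_le (lamMinPos_bddBelow M hM) hmem
    have hmul := mul_le_mul_of_nonneg_right hle (le_of_lt (mul_pos hr hr))
    calc lamMinPos M * ‖v‖^2 = lamMinPos M * (r * r) := by rw [hrdef]; ring
    _ ≤ r⁻¹ * (r⁻¹ * ((v : Fin n → ℝ) ⬝ᵥ M.mulVec v)) * (r * r) := hmul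
    _ = (v : Fin n → ℝ) ⬝ᵥ M.mulVec v := by field_simp

end MainAux

/-- rank-one update bound: for `P = uuᵀ` and `Q ≠ 0`
symmetric positive semidefinite,
`λ_min(P+Q) ≥ (1 - cos θ(u, ran Q)) · min{‖u‖², λ_min(Q)}`,
where `cos θ(u, ran Q) = ‖P_{ran Q} u‖/‖u‖` and `λ_min` is the smallest
positive eigenvalue. -/
theorem lamMinPos_rank_one_update (n : ℕ) (u : EuclideanSpace ℝ (Fin n))
    (Q : Matrix (Fin n) (Fin n) ℝ) (hQ : Q.PosSemidef) (hQ0 : Q ≠ 0) :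
    lamMinPos (Matrix.of (fun i j => u i * u j) + Q)
      ≥ (1 - ‖(Submodule.orthogonalProjection (LinearMap.range (Matrix.toEuclideanLin Q)) u :
            EuclideanSpace ℝ (Fin n))‖ / ‖u‖)
        * min (‖u‖ ^ 2) (lamMinPos Q) := by
  classical
  set T := Matrix.toEuclideanLin Q with hTdef
  set V := LinearMap.range T with hVdef
  set M := Matrix.of (fun i j => u i * u j) + Q with hMdef
  have hsym : T.IsSymmetric := Matrix.isHermitian_iff_isSymmetric.mp hQ.1
  have hTker : ∀ w ∈ Vᗮ, T w = 0 := by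
    intro w hw
    rw [← inner_self_eq_zero (𝕜 := ℝ)]
    have h1 : ⟪T w, T w⟫ = ⟪w, T (T w)⟫ := hsym w (T w)
    rw [h1, real_inner_comm]
    exact Submodule.inner_right_of_mem_orthogonal (LinearMap.mem_range_self T (T w)) hw
  have hQdiag : ∀ i, 0 ≤ Q i i := by
    intro i
    have h := psd_dot Q hQ (Pi.single i 1)
    simpa [Matrix.mulVec_single, dotProduct_single] using h
  -- M is positive semidefinite
  have hMpsd : M.PosSemidef := by
    refine Matrix.PosSemidef.of_dotProduct_mulVec_nonneg ?_ ?_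
    · rw [hMdef]
      refine Matrix.IsHermitian.add ?_ hQ.1
      show _ = _
      ext i j
      simp [Matrix.conjTranspose_apply, Matrix.of_apply, mul_comm]
    · intro x
      have h1 : (star x : Fin n → ℝ) = x := by simp
      rw [hMdef]
      have := psd_dot Q hQ x
      simp only [Matrix.add_mulVec, dotProduct_add, h1]
      rw [rankone_mulVec u x, dotProduct_smul]
      have hcm : x ⬝ᵥ (u : Fin n → ℝ) = (u : Fin n → ℝ) ⬝ᵥ x := dotProduct_comm _ _
      simp only [smul_eq_mul, hcm]
      have hsq : 0 ≤ ((u : Fin n → ℝ) ⬝ᵥ x) * ((u : Fin n → ℝ) ⬝ᵥ x) := mul_self_nonneg _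
      simpa using add_nonneg hsq this
  -- find a nonzero vector in the range of M
  have hy0ex : ∃ y : Fin n → ℝ, M.mulVec y ≠ 0 := by
    by_contra h
    push_neg at h
    have hM0 : M = 0 := by
      ext i j
      have := congrFun (h (Pi.single j 1)) i
      simpa [Matrix.mulVec_single] using this
    have hu0 : ∀ i, u i = 0 := by
      intro i
      have h1 : M i i = 0 := by rw [hM0]; rfl
      have h2 : u i * u i + Q i i = 0 := by
        simpa [hMdef, Matrix.add_apply, Matrix.of_apply] using h1
      nlinarith [hQdiag i, mul_self_nonneg (u i)]
    apply hQ0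
    ext i j
    have h1 : M i j = 0 := by rw [hM0]; rfl
    have h2 : u i * u j + Q i j = 0 := by
      simpa [hMdef, Matrix.add_apply, Matrix.of_apply] using h1
    rw [hu0 i] at h2
    simpa using h2
  obtain ⟨y0, hy0⟩ := hy0ex
  set z0 : EuclideanSpace ℝ (Fin n) := (WithLp.equiv 2 (Fin n → ℝ)).symm (M.mulVec y0) with hz0
  have hz0ne : z0 ≠ 0 := fun h => hy0 (by simpa [hz0] using congrArg WithLp.ofLp h)
  have hr0 : 0 < ‖z0‖ := norm_pos_iff.mpr hz0ne
  set x0 : EuclideanSpace ℝ (Fin n) := ‖z0‖⁻¹ • z0 with hx0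
  have hx01 : ‖x0‖ = 1 := by
    rw [hx0, norm_smul, norm_inv, norm_norm, inv_mul_cancel₀ (ne_of_gt hr0)]
  have hx0mem : (x0 : Fin n → ℝ) = M.mulVec (‖z0‖⁻¹ • y0) := by
    show ‖z0‖⁻¹ • (z0 : Fin n → ℝ) = M.mulVec (‖z0‖⁻¹ • y0)
    rw [Matrix.mulVec_smul]
    rfl
  rw [ge_iff_le]
  show _ ≤ lamMinPos M
  conv_rhs => rw [lamMinPos]
  refine le_csInf ⟨_, x0, hx01, ⟨_, hx0mem⟩, rfl⟩ ?_
  rintro t ⟨x, hx1, ⟨y, hxy⟩, rfl⟩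
  -- decomposition
  set v : EuclideanSpace ℝ (Fin n) := (Submodule.orthogonalProjection V x : EuclideanSpace ℝ (Fin n)) with hv
  set w : EuclideanSpace ℝ (Fin n) := x - v with hw
  set uV : EuclideanSpace ℝ (Fin n) := (Submodule.orthogonalProjection V u : EuclideanSpace ℝ (Fin n)) with huV
  set uP : EuclideanSpace ℝ (Fin n) := u - uV with huP
  have hvV : v ∈ V := SetLike.coe_mem _
  have hwV : w ∈ Vᗮ := Submodule.sub_starProjection_mem_orthogonal x
  have huVV : uV ∈ V := SetLike.coe_mem _
  have huPV : uP ∈ Vᗮ := Submodule.sub_starProjection_mem_orthogonal u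
  have hpyth_x : ‖v‖^2 + ‖w‖^2 = 1 := by
    have h := pyth V x
    rw [hx1, one_pow] at h
    exact h
  have hpyth_u : ‖uV‖^2 + ‖uP‖^2 = ‖u‖^2 := pyth V u
  set β : ℝ := (u : Fin n → ℝ) ⬝ᵥ y with hβ
  set q : EuclideanSpace ℝ (Fin n) := T ((WithLp.equiv 2 (Fin n → ℝ)).symm y) with hq
  have hqV : q ∈ V := LinearMap.mem_range_self T _
  have hxE : x = β • u + q := by
    have h1 : M.mulVec y = β • ((WithLp.equiv 2 (Fin n → ℝ)) u) + Q.mulVec y := by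
      rw [hMdef, Matrix.add_mulVec, rankone_mulVec]
      rfl
    exact WithLp.ofLp_injective 2 (hxy.trans h1)
  have hprx : v = β • uV + q := by
    rw [hv, hxE, map_add, map_smul]
    push_cast
    rw [show ((Submodule.orthogonalProjection V q : EuclideanSpace ℝ (Fin n))) = q from Submodule.starProjection_eq_self_iff.mpr hqV]
  have hwβ : w = β • uP := by
    rw [hw, hxE, hprx, huP]
    module
  have husplit : u = uV + uP := by rw [huP]; abel
  have hxsplit : x = v + w := by rw [hw]; abel
  have hcross1 : ⟪uV, w⟫ = 0 := Submodule.inner_right_of_mem_orthogonal huVV hwV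
  have hcross2 : ⟪uP, v⟫ = 0 := by
    rw [real_inner_comm]
    exact Submodule.inner_right_of_mem_orthogonal hvV huPV
  have hux : ⟪u, x⟫ = ⟪uP, w⟫ + ⟪uV, v⟫ := by
    conv_lhs => rw [husplit, hxsplit]
    rw [inner_add_left, inner_add_right, inner_add_right, hcross1, hcross2]
    ring
  have hA : ⟪uP, w⟫ = β * ‖uP‖^2 := by
    rw [hwβ, real_inner_smul_right, real_inner_self_eq_norm_sq]
  have hwn : ‖w‖^2 = β^2 * ‖uP‖^2 := by
    rw [hwβ, norm_smul, Real.norm_eq_abs, mul_pow, sq_abs]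
  have hA2 : ⟪uP, w⟫^2 = ‖w‖^2 * (‖u‖^2 - ‖uV‖^2) := by
    rw [hA]
    linear_combination (-(‖uP‖^2)) * hwn + ‖w‖^2 * hpyth_u
  have hB : |⟪uV, v⟫| ≤ ‖uV‖ * ‖v‖ := abs_real_inner_le_norm _ _
  -- the Q-part
  have hTw : T w = 0 := hTker w hwV
  have hxQ : (x : Fin n → ℝ) ⬝ᵥ Q.mulVec x = (v : Fin n → ℝ) ⬝ᵥ Q.mulVec v := by
    rw [← toEuc_coe, ← toEuc_coe, ← inner_eq_dot, ← inner_eq_dot, ← hTdef]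
    conv_lhs => rw [hxsplit]
    rw [map_add, hTw, add_zero, inner_add_left]
    have h0 : ⟪w, T v⟫ = 0 := by
      rw [real_inner_comm]
      exact Submodule.inner_right_of_mem_orthogonal (LinearMap.mem_range_self T v) hwV
    rw [h0, add_zero]
  have hvrange : ∃ y2 : Fin n → ℝ, (v : Fin n → ℝ) = Q.mulVec y2 := by
    obtain ⟨z, hz⟩ := hvV
    exact ⟨z, by rw [← hz]; rfl⟩
  have hray : lamMinPos Q * ‖v‖^2 ≤ (v : Fin n → ℝ) ⬝ᵥ Q.mulVec v := rayleigh_lb Q hQ v hvrange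
  have hMx : (x : Fin n → ℝ) ⬝ᵥ M.mulVec x = ⟪u, x⟫^2 + (x : Fin n → ℝ) ⬝ᵥ Q.mulVec x := by
    rw [hMdef, Matrix.add_mulVec, dotProduct_add, rankone_mulVec, dotProduct_smul,
      inner_eq_dot]
    have hcm : (x : Fin n → ℝ) ⬝ᵥ (u : Fin n → ℝ) = (u : Fin n → ℝ) ⬝ᵥ (x : Fin n → ℝ) :=
      dotProduct_comm _ _
    rw [smul_eq_mul, hcm]
    ring
  have hpU : ‖uV‖ ≤ ‖u‖ := by
    nlinarith [hpyth_u, norm_nonneg uV, norm_nonneg u, sq_nonneg ‖uP‖]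
  have hkey := key_real ‖u‖ ‖uV‖ (lamMinPos Q) ⟪uP, w⟫ ⟪uV, v⟫ ‖w‖ ‖v‖
    (norm_nonneg _) hpU (lamMinPos_nonneg Q hQ) (norm_nonneg _) (norm_nonneg _)
    (by linarith) hA2 hB
  have h9 : (⟪uP, w⟫ + ⟪uV, v⟫)^2 = ⟪u, x⟫^2 := by rw [hux]
  rw [hMx, hxQ]
  linarith [hkey, hray, h9]
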